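/- Let P = (1/2)Id_n ⊕ (−1/2)Id_m and A = κ·Id_n ⊕ 0·Id_m be commuting diagonal matrices of size d = n + m. Define the mixed symmetric function σ_{j,1}(P,A) as the polarization of σ_j evaluated at one copy of P and j−1 copies of A: σ_{j,1}(P,A) = (1/j!) δ^{j_1…j_j}_{i_1…i_j} P^{i_1}_{j_1} A^{i_2}_{j_2} ⋯ A^{i_j}_{j_j}. Then σ_{j,1}(P,A) = ((n−m+1−j)/(2j))·C(n, j−1)·κ^{j−1}. -/

import Mathlib

open Finset

/-- The generalized Kronecker delta `δ^{U_1 … U_r}_{L_1 … L_r}`. -/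
noncomputable def genKronecker {d r : ℕ} (U L : Fin r → Fin d) : ℝ :=
  Matrix.det (Matrix.of fun a b => if U a = L b then (1 : ℝ) else 0)

/-- The mixed symmetric function `σ_{k,l}(B,C)`: the polarization of `σ_k` evaluated at
`l` copies of `B` and `k - l` copies of `C`, i.e.
`σ_{k,l}(B,C) = (1/k!) δ^{j_1…j_k}_{i_1…i_k} B^{i_1}_{j_1}⋯B^{i_l}_{j_l}
C^{i_{l+1}}_{j_{l+1}}⋯C^{i_k}_{j_k}`. -/
noncomputable def mixedSigma (d k l : ℕ) (B C : Matrix (Fin d) (Fin d) ℝ) : ℝ :=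
  (k.factorial : ℝ)⁻¹ * ∑ I : Fin k → Fin d, ∑ J : Fin k → Fin d,
    genKronecker J I *
      ∏ a : Fin k, (if (a : ℕ) < l then B (I a) (J a) else C (I a) (J a))

lemma genKronecker_self {d r : ℕ} (I : Fin r → Fin d) :
    genKronecker I I = if Function.Injective I then 1 else 0 := by
  unfold genKronecker
  by_cases h : Function.Injective I
  · rw [if_pos h]
    have h1 : (Matrix.of fun a b => if I a = I b then (1:ℝ) else 0) = 1 := by
      ext a b
      simp [Matrix.one_apply, h.eq_iff]
    rw [h1, Matrix.det_one]
  · rw [if_neg h]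
    rw [Function.not_injective_iff] at h
    obtain ⟨a, b, hab, hne⟩ := h
    apply Matrix.det_zero_of_row_eq hne
    ext c
    simp [Matrix.of_apply, hab]

lemma indicator_cons_aux {α : Type*} [DecidableEq α] {k : ℕ} (T : Finset α) (κ : ℝ)
    (x : α) (p : Fin k → α) :
    (if (x ∉ Set.range p ∧ Function.Injective p) then (1:ℝ) else 0) *
      ∏ a, (if p a ∈ T then κ else 0)
    = (if Function.Injective p then (1:ℝ) else 0) *
      ∏ a, (if p a ∈ T.erase x then κ else 0) := by
  by_cases hp : Function.Injective p
  · by_cases hx : x ∈ Set.range p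
    · obtain ⟨a, ha⟩ := hx
      rw [if_neg (by tauto), if_pos hp, zero_mul, one_mul]
      rw [Finset.prod_eq_zero (Finset.mem_univ a)]
      rw [ha, if_neg (Finset.notMem_erase x T)]
    · rw [if_pos ⟨hx, hp⟩, if_pos hp]
      congr 1
      refine Finset.prod_congr rfl fun a _ => ?_
      have : p a ≠ x := fun h => hx ⟨a, h⟩
      simp [Finset.mem_erase, this]
  · rw [if_neg (by tauto), if_neg hp]
    simp

lemma sum_inj_indicator {α : Type*} [Fintype α] [DecidableEq α] (κ : ℝ) :
    ∀ (k : ℕ) (T : Finset α),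
      (∑ I : Fin k → α, (if Function.Injective I then (1:ℝ) else 0) *
        ∏ a, (if I a ∈ T then κ else 0))
      = κ ^ k * (T.card.descFactorial k : ℝ)
  | 0, T => by
      simp [Function.injective_of_subsingleton]
  | (k+1), T => by
      rw [← (Fin.consEquiv fun _ => α).sum_comp, Fintype.sum_prod_type]
      have step : ∀ (x : α) (p : Fin k → α),
          (if Function.Injective (Fin.cons x p : Fin (k+1) → α) then (1:ℝ) else 0) *
            ∏ a : Fin (k+1), (if (Fin.cons x p : Fin (k+1) → α) a ∈ T then κ else 0)
          = (if x ∈ T then κ else 0) *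
            ((if Function.Injective p then (1:ℝ) else 0) *
              ∏ a, (if p a ∈ T.erase x then κ else 0)) := by
        intro x p
        rw [Fin.prod_univ_succ]
        simp only [Fin.cons_zero, Fin.cons_succ, Fin.cons_injective_iff]
        rw [← indicator_cons_aux]
        ring
      refine Eq.trans (Finset.sum_congr rfl fun x _ => Finset.sum_congr rfl fun p _ => step x p) ?_
      have inner : (∑ x : α, ∑ p : Fin k → α, (if x ∈ T then κ else 0) *
            ((if Function.Injective p then (1:ℝ) else 0) *
              ∏ a, (if p a ∈ T.erase x then κ else 0)))
          = ∑ x : α, (if x ∈ T then κ * (κ ^ k * (((T.card - 1).descFactorial k : ℕ) : ℝ)) else 0) := by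
        refine Finset.sum_congr rfl fun x _ => ?_
        rw [← Finset.mul_sum, sum_inj_indicator κ k (T.erase x)]
        by_cases hx : x ∈ T
        · simp [hx, Finset.card_erase_of_mem hx, mul_assoc]
        · simp [hx]
      rw [inner, Finset.sum_ite_mem, Finset.univ_inter, Finset.sum_const, nsmul_eq_mul]
      cases hT : T.card with
      | zero => simp
      | succ t =>
        rw [Nat.succ_descFactorial_succ, Nat.succ_sub_one]
        push_cast
        ring

lemma card_filter_lt (n m : ℕ) :
    (Finset.univ.filter fun i : Fin (n+m) => (i:ℕ) < n).card = n := by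
  have h : (Finset.univ.filter fun i : Fin (n+m) => (i:ℕ) < n)
      = Finset.map ⟨Fin.castLE (Nat.le_add_right n m), Fin.castLE_injective _⟩ Finset.univ := by
    ext i
    simp only [Finset.mem_filter, Finset.mem_univ, true_and, Finset.mem_map,
      Function.Embedding.coeFn_mk]
    constructor
    · intro hi; exact ⟨⟨(i:ℕ), hi⟩, Fin.ext rfl⟩
    · rintro ⟨a, rfl⟩; exact a.isLt
  rw [h, Finset.card_map, Finset.card_univ, Fintype.card_fin]


lemma key_choose (n k : ℕ) : (n:ℝ) * ((n-1).choose k : ℝ) = ((n:ℝ) - k) * (n.choose k : ℝ) := by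
  cases n with
  | zero =>
    rcases Nat.eq_zero_or_pos k with rfl | hk
    · simp
    · simp [Nat.choose_eq_zero_of_lt hk]
  | succ n' =>
    by_cases h : k ≤ n'
    · have h1 : (n'+1) * Nat.choose n' k = Nat.choose (n'+1) (k+1) * (k+1) :=
        Nat.add_one_mul_choose_eq n' k
      have h2 := Nat.choose_succ_right_eq (n'+1) k
      have h3 : (n'+1) * Nat.choose n' k = Nat.choose (n'+1) k * ((n'+1) - k) := h1.trans h2
      have h4 : ((((n'+1) - k : ℕ)) : ℝ) = ((n'+1 : ℕ) : ℝ) - k := by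
        have hle : k ≤ n'+1 := Nat.le_succ_of_le h
        push_cast [Nat.cast_sub hle]
        ring
      calc ((n'+1 : ℕ):ℝ) * ((n'+1-1).choose k : ℝ)
          = (((n'+1) * Nat.choose n' k : ℕ) : ℝ) := by push_cast; ring
        _ = ((Nat.choose (n'+1) k * ((n'+1) - k) : ℕ) : ℝ) := by rw [h3]
        _ = (((n'+1 : ℕ) : ℝ) - k) * ((n'+1).choose k : ℝ) := by push_cast [h4]; ring
    · push_neg at h
      have h1 : Nat.choose n' k = 0 := Nat.choose_eq_zero_of_lt h
      rcases eq_or_lt_of_le (Nat.succ_le_of_lt h) with h2 | h2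
      · rw [show n' + 1 - 1 = n' from rfl, h1, ← h2]
        push_cast
        ring
      · rw [show n' + 1 - 1 = n' from rfl, h1, Nat.choose_eq_zero_of_lt h2]
        push_cast
        ring

theorem mixedSigma_j_one (n m : ℕ) (κ : ℝ) (j : ℕ) (hj : 1 ≤ j)
    (P A : Matrix (Fin (n + m)) (Fin (n + m)) ℝ)
    (hP : P = Matrix.diagonal
      (fun i : Fin (n + m) => if (i : ℕ) < n then (1 : ℝ) / 2 else -(1 : ℝ) / 2))
    (hA : A = Matrix.diagonal (fun i : Fin (n + m) => if (i : ℕ) < n then κ else 0)) :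
    mixedSigma (n + m) j 1 P A =
      (((n : ℝ) - (m : ℝ) + 1 - (j : ℝ)) / (2 * (j : ℝ))) *
        (n.choose (j - 1) : ℝ) * κ ^ (j - 1) := by
  subst hP hA
  obtain ⟨k, rfl⟩ : ∃ k, j = k + 1 := ⟨j - 1, (Nat.succ_pred_eq_of_pos hj).symm⟩
  set b : Fin (n+m) → ℝ := fun i => if (i:ℕ) < n then (1:ℝ)/2 else -(1:ℝ)/2 with hb
  set c : Fin (n+m) → ℝ := fun i => if (i:ℕ) < n then κ else 0 with hc
  set T : Finset (Fin (n+m)) := Finset.univ.filter (fun i : Fin (n+m) => (i:ℕ) < n) with hT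
  have hTcard : T.card = n := card_filter_lt n m
  -- Step 1: collapse the double sum using diagonality
  have hdiag : ∀ I : Fin (k+1) → Fin (n+m),
      (∑ J : Fin (k+1) → Fin (n+m), genKronecker J I *
        ∏ a : Fin (k+1), (if (a:ℕ) < 1 then (Matrix.diagonal b) (I a) (J a)
          else (Matrix.diagonal c) (I a) (J a)))
      = (if Function.Injective I then (1:ℝ) else 0) *
        ∏ a : Fin (k+1), (if (a:ℕ) < 1 then b (I a) else c (I a)) := by
    intro I
    rw [Fintype.sum_eq_single I]
    · rw [genKronecker_self]
      congr 1
      refine Finset.prod_congr rfl fun a _ => ?_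
      split_ifs <;> simp [Matrix.diagonal_apply_eq]
    · intro J hJ
      obtain ⟨a, ha⟩ := Function.ne_iff.mp hJ
      rw [Finset.prod_eq_zero (Finset.mem_univ a), mul_zero]
      split_ifs <;> exact Matrix.diagonal_apply_ne _ (Ne.symm ha)
  unfold mixedSigma
  rw [Finset.sum_congr rfl fun I _ => hdiag I]
  -- Step 2: compute the sum over injective functions
  rw [← (Fin.consEquiv fun _ => Fin (n+m)).sum_comp, Fintype.sum_prod_type]
  have step : ∀ (x : Fin (n+m)) (p : Fin k → Fin (n+m)),
      (if Function.Injective (Fin.cons x p : Fin (k+1) → Fin (n+m)) then (1:ℝ) else 0) *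
        ∏ a : Fin (k+1), (if (a:ℕ) < 1 then b ((Fin.cons x p : Fin (k+1) → Fin (n+m)) a)
          else c ((Fin.cons x p : Fin (k+1) → Fin (n+m)) a))
      = b x * ((if Function.Injective p then (1:ℝ) else 0) *
          ∏ a, (if p a ∈ T.erase x then κ else 0)) := by
    intro x p
    rw [Fin.prod_univ_succ]
    simp only [Fin.cons_zero, Fin.cons_succ, Fin.cons_injective_iff, Fin.val_zero,
      Fin.val_succ, Nat.zero_lt_one, if_true, Nat.lt_one_iff, Nat.succ_ne_zero, if_false]
    have hcT : ∀ i : Fin (n+m), c i = if i ∈ T then κ else 0 := by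
      intro i; simp [hc, hT]
    simp only [hcT]
    rw [← indicator_cons_aux]
    ring
  refine Eq.trans (congrArg _ (Finset.sum_congr rfl fun x _ =>
    Finset.sum_congr rfl fun p _ => step x p)) ?_
  have inner : ∀ x : Fin (n+m),
      (∑ p : Fin k → Fin (n+m), b x * ((if Function.Injective p then (1:ℝ) else 0) *
          ∏ a, (if p a ∈ T.erase x then κ else 0)))
      = if x ∈ T then (1:ℝ)/2 * (κ ^ k * (((n-1).descFactorial k : ℕ) : ℝ))
          else -(1:ℝ)/2 * (κ ^ k * ((n.descFactorial k : ℕ) : ℝ)) := by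
    intro x
    rw [← Finset.mul_sum, sum_inj_indicator κ k (T.erase x)]
    by_cases hx : x ∈ T
    · have : x.val < n := by simpa [hT] using hx
      rw [Finset.card_erase_of_mem hx, hTcard]
      simp [hb, this, hx]
    · have : ¬ x.val < n := by simpa [hT] using hx
      rw [Finset.erase_eq_of_notMem hx, hTcard]
      simp [hb, this, hx]
  rw [Finset.sum_congr rfl fun x _ => inner x]
  have hsplit : (∑ x : Fin (n+m),
      if x ∈ T then (1:ℝ)/2 * (κ ^ k * (((n-1).descFactorial k : ℕ) : ℝ))
        else -(1:ℝ)/2 * (κ ^ k * ((n.descFactorial k : ℕ) : ℝ)))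
      = (n:ℝ) * ((1:ℝ)/2 * (κ ^ k * (((n-1).descFactorial k : ℕ) : ℝ)))
        + (m:ℝ) * (-(1:ℝ)/2 * (κ ^ k * ((n.descFactorial k : ℕ) : ℝ))) := by
    rw [Finset.sum_ite, Finset.sum_const, Finset.sum_const]
    have h1 : (Finset.univ.filter (fun x : Fin (n+m) => x ∈ T)).card = n := by
      have he : Finset.univ.filter (fun x : Fin (n+m) => x ∈ T) = T := by
        ext x; simp
      rw [he, hTcard]
    have h2 : (Finset.univ.filter (fun x : Fin (n+m) => x ∉ T)).card = m := by
      have h3 := Finset.card_filter_add_card_filter_not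
        (s := (Finset.univ : Finset (Fin (n+m)))) (p := fun x => x ∈ T)
      rw [h1] at h3
      have h4 : (Finset.univ : Finset (Fin (n+m))).card = n + m := by
        rw [Finset.card_univ, Fintype.card_fin]
      omega
    rw [h1, h2, nsmul_eq_mul, nsmul_eq_mul]
  rw [hsplit]
  -- final arithmetic
  have hkey := key_choose n k
  have hfac : (k.factorial : ℝ) ≠ 0 := Nat.cast_ne_zero.mpr k.factorial_ne_zero
  have hk1 : ((k:ℝ)+1) ≠ 0 := by positivity
  rw [Nat.descFactorial_eq_factorial_mul_choose, Nat.descFactorial_eq_factorial_mul_choose,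
    Nat.factorial_succ, Nat.add_sub_cancel]
  push_cast
  field_simp
  linear_combination κ^k * hkey
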